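/- For every Dyck path P, the contact vector of P equals the descent vector of the conjugate of P: C(P) = D(Conj(P)). -/

import Mathlib

/-- A step of a Dyck path: `u` (up) or `d` (down). -/
inductive Step where
  | u : Step
  | d : Step
deriving DecidableEq, Repr

open Step

/-- Number of up steps of a word. -/
def countU (w : List Step) : ℕ := w.count u

/-- Number of down steps of a word. -/
def countD (w : List Step) : ℕ := w.count d

/-- A word over {u,d} is a Dyck path if it has as many u's as d's and
every prefix has at least as many u's as d's. -/
def IsDyck (w : List Step) : Prop :=
  countU w = countD w ∧ ∀ p : List Step, p <+: w → countD p ≤ countU p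

/-- Number of occurrences of the two-letter factor `ab` in `w`. -/
def pairCount (a b : Step) (w : List Step) : ℕ := (w.zip w.tail).count (a, b)

/-- The conjugation relation on Dyck paths: `ConjRel P Q` holds iff `Q` is the
conjugate of `P`, following the recursive definition `Conj(∅) = ∅` and
`Conj(P1 u P2 d) = Conj(P2) u Conj(P1) d` over the unique last-arch
decomposition of non-empty Dyck paths. -/
inductive ConjRel : List Step → List Step → Prop
  | nil : ConjRel [] []
  | arch {P1 P2 Q1 Q2 : List Step} :
      IsDyck P1 → IsDyck P2 → ConjRel P1 Q1 → ConjRel P2 Q2 →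
      ConjRel (P1 ++ [Step.u] ++ P2 ++ [Step.d]) (Q2 ++ [Step.u] ++ Q1 ++ [Step.d])

/-- Number of non-empty prefixes of `w` that are Dyck paths
(equivalently, non-initial returns of the walk of `w` to its starting height,
before the walk ever goes below it). -/
noncomputable def dyckPrefixCount (w : List Step) : ℕ :=
  Nat.card {k : Fin w.length // IsDyck (w.take (k + 1))}

/-- Indices (0-based positions) of the up steps of `w`. -/
def upIndexes : List Step → List ℕ
  | [] => []
  | Step.u :: t => 0 :: (upIndexes t).map (· + 1)
  | _ :: t => (upIndexes t).map (· + 1)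

/-- The components of the contact vector of a Dyck path `w`:
`contact w 0` is the number of non-initial contacts of `w` with the `x`-axis,
and for `1 ≤ i`, `contact w i` is the number of non-initial returns to its
starting height of the maximal Dyck subpath following the `i`-th up step. -/
noncomputable def contact (w : List Step) : ℕ → ℕ
  | 0 => dyckPrefixCount w
  | i + 1 => dyckPrefixCount (w.drop ((upIndexes w).getD i 0 + 1))

/-- The contact vector `(c_0, ..., c_n)` of a Dyck path of size `n`. -/
noncomputable def contactVec (w : List Step) : List ℕ :=
  (List.range (countU w + 1)).map (contact w)

/-- The Dyck word `d^{d_n} u d^{d_{n-1}} u ... u d^{d_0}` encoded by a descent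
vector `(d_0, ..., d_n)` (given as the list `[d_0, ..., d_n]`). A Dyck path `Q`
has descent vector `v` (of length `n+1`) iff `wordOfDesc v = Q`. -/
def wordOfDesc : List ℕ → List Step
  | [] => []
  | [a] => List.replicate a Step.d
  | a :: rest => wordOfDesc rest ++ [Step.u] ++ List.replicate a Step.d

instance : DecidablePred IsDyck := fun w =>
  decidable_of_iff (countU w = countD w ∧ ∀ p ∈ w.inits, countD p ≤ countU p)
    (by simp [IsDyck, List.mem_inits])

lemma natcard_fin (n : ℕ) (p : ℕ → Prop) [DecidablePred p] :
    Nat.card {k : Fin n // p k} = ((Finset.range n).filter p).card := by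
  rw [Nat.card_eq_fintype_card, Fintype.card_subtype]
  rw [Finset.card_filter, Finset.card_filter]
  exact Fin.sum_univ_eq_sum_range (fun k => if p k then 1 else 0) n

lemma dyckPrefixCount_eq (w : List Step) :
    dyckPrefixCount w = ((Finset.range w.length).filter (fun k => IsDyck (w.take (k+1)))).card := by
  rw [dyckPrefixCount]
  exact natcard_fin w.length (fun k => IsDyck (w.take (k+1)))

lemma countU_append (a b : List Step) : countU (a ++ b) = countU a + countU b := by
  simp [countU, List.count_append]

lemma countD_append (a b : List Step) : countD (a ++ b) = countD a + countD b := by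
  simp [countD, List.count_append]

lemma countU_u : countU [Step.u] = 1 := by decide
lemma countU_d : countU [Step.d] = 0 := by decide
lemma countD_u : countD [Step.u] = 0 := by decide
lemma countD_d : countD [Step.d] = 1 := by decide

lemma dyckPrefixCount_append_of_bad (s t : List Step) (h : countU s < countD s) :
    dyckPrefixCount (s ++ t) = dyckPrefixCount s := by
  rw [dyckPrefixCount_eq, dyckPrefixCount_eq]
  congr 1
  ext k
  simp only [Finset.mem_filter, Finset.mem_range, List.length_append]
  constructor
  · rintro ⟨hk, hd⟩
    have hks : k < s.length := by
      by_contra hks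
      push_neg at hks
      have hpre : s <+: (s ++ t).take (k + 1) := by
        rw [List.take_append, List.take_of_length_le (by omega)]
        exact List.prefix_append _ _
      exact absurd (hd.2 s hpre) (by omega)
    refine ⟨hks, ?_⟩
    rwa [List.take_append_of_le_length (by omega)] at hd
  · rintro ⟨hk, hd⟩
    exact ⟨by omega, by rwa [List.take_append_of_le_length (by omega)]⟩

lemma dyckPrefixCount_append_d (s : List Step) (hs : IsDyck s) :
    dyckPrefixCount (s ++ [Step.d]) = dyckPrefixCount s := by
  rw [dyckPrefixCount_eq, dyckPrefixCount_eq]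
  congr 1
  ext k
  simp only [Finset.mem_filter, Finset.mem_range, List.length_append, List.length_singleton]
  constructor
  · rintro ⟨hk, hd⟩
    have hks : k < s.length := by
      by_contra h'
      push_neg at h'
      have hk' : k = s.length := by omega
      subst hk'
      rw [List.take_of_length_le (by simp)] at hd
      have := hd.1
      rw [countU_append, countD_append, countU_d, countD_d, hs.1] at this
      omega
    refine ⟨hks, ?_⟩
    rwa [List.take_append_of_le_length (by omega)] at hd
  · rintro ⟨hk, hd⟩
    exact ⟨by omega, by rwa [List.take_append_of_le_length (by omega)]⟩

lemma arch_reassoc (P1 P2 : List Step) :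
    P1 ++ [Step.u] ++ P2 ++ [Step.d] = (P1 ++ [Step.u]) ++ (P2 ++ [Step.d]) := by
  simp [List.append_assoc]

lemma take_arch_large (P1 P2 : List Step) (n : ℕ) (hn : P1.length < n) :
    (P1 ++ [Step.u] ++ P2 ++ [Step.d]).take n
      = (P1 ++ [Step.u]) ++ ((P2 ++ [Step.d]).take (n - (P1.length + 1))) := by
  rw [arch_reassoc, List.take_append,
    List.take_of_length_le (by simp; omega)]
  simp

lemma count_take_P2d (P2 : List Step) (h2 : IsDyck P2) (m : ℕ) :
    countD ((P2 ++ [Step.d]).take m) ≤ countU ((P2 ++ [Step.d]).take m) + 1 := by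
  rcases le_or_gt m P2.length with hm | hm
  · rw [List.take_append_of_le_length hm]
    have := h2.2 (P2.take m) (List.take_prefix m P2)
    omega
  · rw [List.take_of_length_le (by simp; omega)]
    rw [countU_append, countD_append, countU_d, countD_d, h2.1]

lemma isDyck_arch (P1 P2 : List Step) (h1 : IsDyck P1) (h2 : IsDyck P2) :
    IsDyck (P1 ++ [Step.u] ++ P2 ++ [Step.d]) := by
  constructor
  · simp only [countU_append, countD_append, countU_u, countU_d, countD_u, countD_d, h1.1, h2.1]
    omega
  · intro p hp
    obtain ⟨n, rfl⟩ : ∃ n, p = (P1 ++ [Step.u] ++ P2 ++ [Step.d]).take n := by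
      obtain ⟨t, ht⟩ := hp
      exact ⟨p.length, by rw [← ht, List.take_left]⟩
    rcases le_or_gt n P1.length with hn | hn
    · rw [arch_reassoc, List.take_append_of_le_length (by simp; omega),
        List.take_append_of_le_length hn]
      exact h1.2 _ (List.take_prefix n P1)
    · rw [take_arch_large P1 P2 n hn, countU_append, countD_append, countU_append,
        countD_append, countU_u, countD_u, h1.1]
      have := count_take_P2d P2 h2 (n - (P1.length + 1))
      omega

lemma dyckPrefixCount_arch (P1 P2 : List Step) (h1 : IsDyck P1) (h2 : IsDyck P2) :
    dyckPrefixCount (P1 ++ [Step.u] ++ P2 ++ [Step.d]) = dyckPrefixCount P1 + 1 := by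
  rw [dyckPrefixCount_eq, dyckPrefixCount_eq]
  have hlen : (P1 ++ [Step.u] ++ P2 ++ [Step.d]).length = P1.length + P2.length + 2 := by
    simp; omega
  have hset : (Finset.range (P1 ++ [Step.u] ++ P2 ++ [Step.d]).length).filter
      (fun k => IsDyck ((P1 ++ [Step.u] ++ P2 ++ [Step.d]).take (k+1)))
      = insert (P1.length + P2.length + 1)
        ((Finset.range P1.length).filter (fun k => IsDyck (P1.take (k+1)))) := by
    rw [hlen]
    ext k
    simp only [Finset.mem_filter, Finset.mem_range, Finset.mem_insert]
    constructor
    · rintro ⟨hk, hd⟩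
      rcases lt_or_ge k P1.length with hks | hks
      · right
        refine ⟨hks, ?_⟩
        rwa [arch_reassoc, List.take_append_of_le_length (by simp; omega),
          List.take_append_of_le_length (by omega)] at hd
      · left
        by_contra hne
        have hk1 : P1.length < k + 1 := by omega
        rw [take_arch_large P1 P2 (k+1) hk1] at hd
        have hcu := hd.1
        rw [countU_append, countD_append, countU_append, countD_append,
          countU_u, countD_u, h1.1] at hcu
        set m := k + 1 - (P1.length + 1) with hm
        have hmle : m ≤ P2.length := by omega
        rw [List.take_append_of_le_length hmle] at hcu
        have := h2.2 (P2.take m) (List.take_prefix m P2)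
        omega
    · rintro (rfl | ⟨hk, hd⟩)
      · refine ⟨by omega, ?_⟩
        rw [show P1.length + P2.length + 1 + 1 = (P1 ++ [Step.u] ++ P2 ++ [Step.d]).length by omega,
          List.take_length]
        exact isDyck_arch P1 P2 h1 h2
      · refine ⟨by omega, ?_⟩
        rwa [arch_reassoc, List.take_append_of_le_length (by simp; omega),
          List.take_append_of_le_length (by omega)]
  rw [hset, Finset.card_insert_of_notMem (by simp; intro h; omega)]

lemma upIndexes_length (w : List Step) : (upIndexes w).length = countU w := by
  induction w with
  | nil => rfl
  | cons a t ih =>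
    cases a <;> simp [upIndexes, countU, List.count_cons, ih] <;> simp [countU] at ih <;> omega

lemma upIndexes_get (w : List Step) : ∀ i ∈ upIndexes w, w[i]? = some Step.u := by
  induction w with
  | nil => simp [upIndexes]
  | cons a t ih =>
    cases a
    · intro i hi
      simp only [upIndexes, List.mem_cons, List.mem_map] at hi
      rcases hi with rfl | ⟨j, hj, rfl⟩
      · simp
      · simpa using ih j hj
    · intro i hi
      simp only [upIndexes, List.mem_map] at hi
      rcases hi with ⟨j, hj, rfl⟩
      simpa using ih j hj

lemma upIndexes_append (w1 w2 : List Step) :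
    upIndexes (w1 ++ w2) = upIndexes w1 ++ (upIndexes w2).map (· + w1.length) := by
  induction w1 with
  | nil => simp [upIndexes]
  | cons a t ih =>
    cases a <;>
      simp [upIndexes, ih, List.map_map, Function.comp] <;>
      congr 1 <;> ext x <;> omega

lemma suffix_bad (w : List Step) (hw : IsDyck w) (i : ℕ) (hi : w[i]? = some Step.u) :
    countU (w.drop (i+1)) < countD (w.drop (i+1)) := by
  have hlen : i < w.length := by
    by_contra h
    push_neg at h
    rw [List.getElem?_eq_none (by omega)] at hi
    cases hi
  have h1 : w.take (i+1) = w.take i ++ [Step.u] := by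
    rw [List.take_succ, hi]; rfl
  have h2 := hw.2 (w.take i) (List.take_prefix i w)
  have h3 : countU (w.take (i+1)) + countU (w.drop (i+1)) = countU w := by
    rw [← countU_append, List.take_append_drop]
  have h4 : countD (w.take (i+1)) + countD (w.drop (i+1)) = countD w := by
    rw [← countD_append, List.take_append_drop]
  rw [h1, countU_append, countU_u] at h3
  rw [h1, countD_append, countD_u] at h4
  have h5 := hw.1
  omega

lemma upIndexes_arch (P1 P2 : List Step) :
    upIndexes (P1 ++ [Step.u] ++ P2 ++ [Step.d])
      = upIndexes P1 ++ (P1.length :: (upIndexes P2).map (fun x => x + 1 + P1.length)) := by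
  have h : P1 ++ [Step.u] ++ P2 ++ [Step.d] = P1 ++ ([Step.u] ++ (P2 ++ [Step.d])) := by simp
  rw [h, upIndexes_append]
  congr 1
  show ((upIndexes (Step.u :: (P2 ++ [Step.d]))).map (· + P1.length)) = _
  rw [show upIndexes (Step.u :: (P2 ++ [Step.d]))
      = 0 :: (upIndexes (P2 ++ [Step.d])).map (· + 1) from rfl]
  rw [upIndexes_append]
  simp [upIndexes, List.map_map, Function.comp]
  intro a _
  omega

lemma contact_arch_zero (P1 P2 : List Step) (h1 : IsDyck P1) (h2 : IsDyck P2) :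
    contact (P1 ++ [Step.u] ++ P2 ++ [Step.d]) 0 = contact P1 0 + 1 := by
  show dyckPrefixCount _ = dyckPrefixCount _ + 1
  exact dyckPrefixCount_arch P1 P2 h1 h2

lemma contact_arch_left (P1 P2 : List Step) (h1 : IsDyck P1) (h2 : IsDyck P2)
    (k : ℕ) (hk : k < countU P1) :
    contact (P1 ++ [Step.u] ++ P2 ++ [Step.d]) (k + 1) = contact P1 (k + 1) := by
  have hklen : k < (upIndexes P1).length := by rw [upIndexes_length]; exact hk
  show dyckPrefixCount _ = dyckPrefixCount _
  rw [upIndexes_arch, List.getD_append _ _ _ _ hklen]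
  set i := (upIndexes P1).getD k 0 with hi
  have himem : i ∈ upIndexes P1 := by
    rw [hi, List.getD_eq_getElem _ _ hklen]; exact List.getElem_mem hklen
  have hgu : P1[i]? = some Step.u := upIndexes_get P1 i himem
  have hilen : i < P1.length := by
    by_contra hc
    push_neg at hc
    rw [List.getElem?_eq_none (by omega)] at hgu
    cases hgu
  have hdrop : (P1 ++ [Step.u] ++ P2 ++ [Step.d]).drop (i + 1)
      = P1.drop (i + 1) ++ ([Step.u] ++ (P2 ++ [Step.d])) := by
    rw [show P1 ++ [Step.u] ++ P2 ++ [Step.d] = P1 ++ ([Step.u] ++ (P2 ++ [Step.d])) by simp,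
      List.drop_append, show i + 1 - P1.length = 0 by omega, List.drop_zero]
  rw [hdrop, dyckPrefixCount_append_of_bad _ _ (suffix_bad P1 h1 i hgu)]

lemma contact_arch_mid (P1 P2 : List Step) (h1 : IsDyck P1) (h2 : IsDyck P2) :
    contact (P1 ++ [Step.u] ++ P2 ++ [Step.d]) (countU P1 + 1) = contact P2 0 := by
  have hklen : (upIndexes P1).length = countU P1 := upIndexes_length P1
  show dyckPrefixCount _ = dyckPrefixCount _
  rw [upIndexes_arch, List.getD_append_right _ _ _ _ (by omega), show countU P1 - (upIndexes P1).length = 0 by omega,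
    List.getD_cons_zero]
  rw [show P1 ++ [Step.u] ++ P2 ++ [Step.d] = (P1 ++ [Step.u]) ++ (P2 ++ [Step.d]) by simp,
    show P1.length + 1 = (P1 ++ [Step.u]).length by simp, List.drop_left]
  exact dyckPrefixCount_append_d P2 h2

lemma contact_arch_right (P1 P2 : List Step) (h1 : IsDyck P1) (h2 : IsDyck P2)
    (k : ℕ) (hk : k < countU P2) :
    contact (P1 ++ [Step.u] ++ P2 ++ [Step.d]) (countU P1 + 1 + (k + 1)) = contact P2 (k + 1) := by
  have hklen : k < (upIndexes P2).length := by rw [upIndexes_length]; exact hk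
  have h1len : (upIndexes P1).length = countU P1 := upIndexes_length P1
  show dyckPrefixCount _ = dyckPrefixCount _
  simp only [Nat.add_eq]
  rw [upIndexes_arch, List.getD_append_right _ _ _ _ (by omega),
    show countU P1 + 1 + k - (upIndexes P1).length = k + 1 by omega, List.getD_cons_succ,
    List.getD_eq_getElem _ _ (by simpa using hklen), List.getElem_map]
  set j := (upIndexes P2)[k] with hj
  have hjd : j = (upIndexes P2).getD k 0 := (List.getD_eq_getElem _ _ hklen).symm
  have himem : j ∈ upIndexes P2 := List.getElem_mem hklen
  have hgu : P2[j]? = some Step.u := upIndexes_get P2 j himem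
  have hjlen : j < P2.length := by
    by_contra hc
    push_neg at hc
    rw [List.getElem?_eq_none (by omega)] at hgu
    cases hgu
  have hdrop : (P1 ++ [Step.u] ++ P2 ++ [Step.d]).drop (j + 1 + P1.length + 1)
      = P2.drop (j + 1) ++ [Step.d] := by
    rw [show P1 ++ [Step.u] ++ P2 ++ [Step.d] = (P1 ++ [Step.u]) ++ (P2 ++ [Step.d]) by simp,
      List.drop_append,
      List.drop_of_length_le (l := P1 ++ [Step.u]) (by simp),
      show j + 1 + P1.length + 1 - (P1 ++ [Step.u]).length = j + 1 by simp,
      List.drop_append, show j + 1 - P2.length = 0 by omega, List.drop_zero]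
    simp
  rw [hdrop, dyckPrefixCount_append_of_bad _ _ (suffix_bad P2 h2 j hgu), hjd]

lemma contactVec_expand (w : List Step) :
    contactVec w = contact w 0 :: (List.range (countU w)).map (fun k => contact w (k+1)) := by
  rw [contactVec, List.range_succ_eq_map, List.map_cons, List.map_map]
  rfl

lemma contactVec_arch (P1 P2 : List Step) (h1 : IsDyck P1) (h2 : IsDyck P2) :
    contactVec (P1 ++ [Step.u] ++ P2 ++ [Step.d])
      = ((contact P1 0 + 1) :: ((List.range (countU P1)).map (fun k => contact P1 (k+1))))
        ++ ((contact P2 0) :: ((List.range (countU P2)).map (fun k => contact P2 (k+1)))) := by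
  have hcu : countU (P1 ++ [Step.u] ++ P2 ++ [Step.d]) = countU P1 + countU P2 + 1 := by
    rw [countU_append, countU_append, countU_append, countU_u, countU_d]
    omega
  rw [contactVec, hcu,
    show countU P1 + countU P2 + 1 + 1 = (countU P1 + 1) + (countU P2 + 1) by omega,
    List.range_add, List.map_append]
  congr 1
  · rw [List.range_succ_eq_map, List.map_cons, List.map_map]
    congr 1
    · exact contact_arch_zero P1 P2 h1 h2
    · apply List.map_congr_left
      intro a ha
      rw [List.mem_range] at ha
      exact contact_arch_left P1 P2 h1 h2 a ha
  · rw [List.range_succ_eq_map, List.map_cons, List.map_map, List.map_cons, List.map_map]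
    congr 1
    · show contact _ (countU P1 + 1 + 0) = contact P2 0
      rw [Nat.add_zero]
      exact contact_arch_mid P1 P2 h1 h2
    · apply List.map_congr_left
      intro a ha
      rw [List.mem_range] at ha
      show contact _ (countU P1 + 1 + Nat.succ a) = contact P2 (a + 1)
      exact contact_arch_right P1 P2 h1 h2 a ha

lemma wordOfDesc_cons (a b : ℕ) (t : List ℕ) :
    wordOfDesc (a :: b :: t) = wordOfDesc (b :: t) ++ [Step.u] ++ List.replicate a Step.d := rfl

lemma wordOfDesc_succ (a : ℕ) (t : List ℕ) :
    wordOfDesc ((a+1) :: t) = wordOfDesc (a :: t) ++ [Step.d] := by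
  cases t with
  | nil => simp [wordOfDesc, List.replicate_succ']
  | cons b t =>
    rw [wordOfDesc_cons, wordOfDesc_cons, List.replicate_succ']
    simp [List.append_assoc]

lemma wordOfDesc_append (L1 L2 : List ℕ) (h1 : L1 ≠ []) (h2 : L2 ≠ []) :
    wordOfDesc (L1 ++ L2) = wordOfDesc L2 ++ [Step.u] ++ wordOfDesc L1 := by
  induction L1 with
  | nil => exact absurd rfl h1
  | cons a t ih =>
    cases t with
    | nil =>
      cases L2 with
      | nil => exact absurd rfl h2
      | cons b s =>
        rw [show [a] ++ b :: s = a :: b :: s from rfl, wordOfDesc_cons]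
        rfl
    | cons c t' =>
      rw [show (a :: c :: t') ++ L2 = a :: ((c :: t') ++ L2) from rfl]
      have hne : (c :: t') ++ L2 ≠ [] := by simp
      obtain ⟨x, s, hx⟩ : ∃ x s, (c :: t') ++ L2 = x :: s := ⟨c, t' ++ L2, rfl⟩
      rw [hx, wordOfDesc_cons, ← hx, ih (by simp), wordOfDesc_cons a c t']
      simp [List.append_assoc]

/-- For every Dyck path `P`, the contact vector of `P` equals the
descent vector of its conjugate: `C(P) = D(Conj(P))`, i.e. the word encoded by
the contact vector of `P` (as a descent vector) is exactly `Conj(P)`. -/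
theorem contactVec_eq_descVec_conj (P Q : List Step)
    (hP : IsDyck P) (hconj : ConjRel P Q) :
    wordOfDesc (contactVec P) = Q := by
  clear hP
  induction hconj with
  | nil =>
    have h0 : contact [] 0 = 0 := by
      show dyckPrefixCount [] = 0
      rw [dyckPrefixCount_eq]
      simp
    have h : contactVec [] = [0] := by
      rw [contactVec, show countU [] + 1 = 1 from rfl, show List.range 1 = [0] from rfl,
        List.map_cons, List.map_nil, h0]
    rw [h]
    rfl
  | @arch P1 P2 Q1 Q2 h1 h2 hc1 hc2 ih1 ih2 =>
    rw [contactVec_arch P1 P2 h1 h2]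
    rw [wordOfDesc_append _ _ (by simp) (by simp), wordOfDesc_succ]
    rw [← contactVec_expand P1, ← contactVec_expand P2, ih1, ih2]
    simp [List.append_assoc]
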